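/- Let X be a set, m ≥ 1, f : X → ℝ^m a vector of m objective functions, and z ∈ ℝ^m a utopian reference point satisfying z_i < f_i(x) for all x ∈ X and all i. If x* ∈ X is weakly Pareto optimal, then there exists a preference vector w in the simplex (w_i > 0 for every i and Σ_{i=1}^m w_i = 1), namely w_i proportional to 1/(f_i(x*) − z_i), such that x* minimizes the weighted-Tchebycheff scalarization Ω_tch(x, w, z) = max_{i ∈ {1,…,m}} w_i |f_i(x) − z_i| over X. -/
import Mathlib

/-- If `x*` is weakly Pareto optimal and `z` is a utopian
reference point (`z_i < f_i(x)` for all `x, i`), then there exists a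
preference vector `w` in the simplex (with `w_i > 0` and `Σ_i w_i = 1`),
namely `w_i` proportional to `1 / (f_i(x*) − z_i)`, such that `x*`
minimizes the weighted-Tchebycheff scalarization
`Ω_tch(x, w, z) = max_i w_i |f_i(x) − z_i|` over `X`. -/
theorem weakly_pareto_optimal_is_tchebycheff_min
    {X : Type*} (m : ℕ) (hm : 1 ≤ m)
    (f : X → Fin m → ℝ) (z : Fin m → ℝ)
    (hz : ∀ (x : X) (i : Fin m), z i < f x i)
    (xstar : X)
    (hpareto : ¬ ∃ x : X, ∀ i, f x i < f xstar i) :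
    ∃ w : Fin m → ℝ,
      (∀ i, 0 < w i) ∧
      (∑ i, w i) = 1 ∧
      (∃ c : ℝ, 0 < c ∧ ∀ i, w i = c / (f xstar i - z i)) ∧
      ∀ x : X, (⨆ i, w i * |f xstar i - z i|) ≤ ⨆ i, w i * |f x i - z i| := by
  haveI : Nonempty (Fin m) := ⟨⟨0, hm⟩⟩
  have hpos : ∀ i, 0 < f xstar i - z i := fun i => sub_pos.2 (hz xstar i)
  set S : ℝ := ∑ i, (f xstar i - z i)⁻¹ with hS
  have hSpos : 0 < S :=
    Finset.sum_pos (fun i _ => inv_pos.2 (hpos i)) Finset.univ_nonempty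
  set c : ℝ := S⁻¹ with hc
  have hcpos : 0 < c := inv_pos.2 hSpos
  refine ⟨fun i => c / (f xstar i - z i), fun i => div_pos hcpos (hpos i), ?_, ⟨c, hcpos, fun i => rfl⟩, ?_⟩
  · simp only [div_eq_mul_inv, ← Finset.mul_sum, ← hS]
    exact inv_mul_cancel₀ (ne_of_gt hSpos)
  · intro x
    have hstar : (⨆ i, c / (f xstar i - z i) * |f xstar i - z i|) = c := by
      have : (fun i => c / (f xstar i - z i) * |f xstar i - z i|) = fun _ => c := by
        funext i
        rw [abs_of_pos (hpos i), div_mul_cancel₀ _ (ne_of_gt (hpos i))]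
      rw [this, ciSup_const]
    rw [hstar]
    -- weak Pareto: some i with f xstar i ≤ f x i
    have : ∃ i, f xstar i ≤ f x i := by
      by_contra h
      push_neg at h
      exact hpareto ⟨x, h⟩
    obtain ⟨i, hi⟩ := this
    have hterm : c ≤ c / (f xstar i - z i) * |f x i - z i| := by
      rw [abs_of_pos (sub_pos.2 (hz x i)), div_mul_eq_mul_div, le_div_iff₀ (hpos i)]
      have : f xstar i - z i ≤ f x i - z i := by linarith
      nlinarith
    refine hterm.trans ?_
    exact le_ciSup (f := fun j => c / (f xstar j - z j) * |f x j - z j|)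
      (Set.Finite.bddAbove (Set.finite_range _)) i
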